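/- arXiv:1801.04843 — 4 statements merged into one kernel-verified Lean document; each statement's English description precedes it below -/
import Mathlib

section
/- Let t > 0, ε > 0 and E ∈ ℝ. Then (1/(2πi)) · ∫_{−∞}^{∞} e^{−i t (x + iε)} / ( i t · (E − (x + iε))² ) dx = e^{−i t E}. -/
open MeasureTheory Real Set Filter Topology FourierTransform

lemma aux_integrableOn (a : ℂ) (ha : 0 < a.re) :
    IntegrableOn (fun s : ℝ => (s : ℂ) * Complex.exp (-a * s)) (Set.Ioi 0) := by
  have hb : IntegrableOn (fun s : ℝ => s * Real.exp (-a.re * s)) (Set.Ioi 0) := by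
    have h := integrableOn_rpow_mul_exp_neg_mul_rpow (s := 1) (p := 1) (b := a.re)
      (by norm_num) (by norm_num) ha
    refine h.congr_fun (fun x hx => ?_) measurableSet_Ioi
    simp [Real.rpow_one]
  refine Integrable.mono' hb ?_ ?_
  · exact (Complex.continuous_ofReal.mul (Complex.continuous_exp.comp
      (continuous_const.mul Complex.continuous_ofReal))).aestronglyMeasurable
  · filter_upwards [ae_restrict_mem measurableSet_Ioi] with x hx
    have : ‖(x : ℂ) * Complex.exp (-a * x)‖ = |x| * Real.exp (-a.re * x) := by
      simp [Complex.norm_exp, Complex.mul_re]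
    rw [this, abs_of_pos hx]

lemma aux_tendsto (a : ℂ) (ha : 0 < a.re) :
    Tendsto (fun s : ℝ => -(((s : ℂ) / a + 1 / a ^ 2)) * Complex.exp (-a * s)) atTop (𝓝 0) := by
  have h1 : Tendsto (fun s : ℝ => s * Real.exp (-a.re * s)) atTop (𝓝 0) := by
    have := Real.tendsto_pow_mul_exp_neg_atTop_nhds_zero 1
    have h2 : Tendsto (fun s : ℝ => a.re * s) atTop atTop :=
      tendsto_id.const_mul_atTop ha
    have h3 := (this.comp h2)
    have : Tendsto (fun s : ℝ => (1 / a.re) * ((a.re * s) ^ 1 * Real.exp (-(a.re * s)))) atTop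
        (𝓝 ((1/a.re) * 0)) := h3.const_mul _
    rw [mul_zero] at this
    refine this.congr (fun s => ?_)
    field_simp
  have h2 : Tendsto (fun s : ℝ => Real.exp (-a.re * s)) atTop (𝓝 0) := by
    have h2 : Tendsto (fun s : ℝ => a.re * s) atTop atTop :=
      tendsto_id.const_mul_atTop ha
    refine (Real.tendsto_exp_neg_atTop_nhds_zero.comp h2).congr fun s => by
      simp [Function.comp, neg_mul]
  rw [tendsto_zero_iff_norm_tendsto_zero]
  have hb : Tendsto (fun s : ℝ => (1/‖a‖) * (s * Real.exp (-a.re * s))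
      + ‖1/a^2‖ * Real.exp (-a.re * s)) atTop (𝓝 (1/‖a‖ * 0 + ‖1/a^2‖ * 0)) :=
    (h1.const_mul _).add (h2.const_mul _)
  simp only [mul_zero, add_zero] at hb
  refine squeeze_zero_norm' ?_ hb
  filter_upwards [eventually_ge_atTop (0:ℝ)] with s hs
  have hre : (-a * (s:ℂ)).re = -a.re * s := by simp [Complex.mul_re]
  have hnorm : ‖-(((s : ℂ) / a + 1 / a ^ 2)) * Complex.exp (-a * s)‖
      = ‖(s : ℂ) / a + 1 / a ^ 2‖ * Real.exp (-a.re * s) := by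
    simp only [norm_mul, norm_neg, Complex.norm_exp, hre]
  rw [Real.norm_eq_abs, abs_of_nonneg (by positivity), hnorm]
  have hle : ‖(s : ℂ) / a + 1 / a ^ 2‖ ≤ s / ‖a‖ + ‖1/a^2‖ := by
    refine (norm_add_le _ _).trans ?_
    gcongr
    rw [norm_div, Complex.norm_real, Real.norm_eq_abs, abs_of_nonneg hs]
  have he : (0:ℝ) < Real.exp (-a.re * s) := Real.exp_pos _
  refine le_trans (mul_le_mul_of_nonneg_right hle he.le) (le_of_eq (by ring))

lemma aux_integral (a : ℂ) (ha : 0 < a.re) :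
    ∫ s in Set.Ioi (0:ℝ), (s : ℂ) * Complex.exp (-a * s) = 1 / a ^ 2 := by
  have ha0 : a ≠ 0 := by intro h; simp [h] at ha
  have hderiv : ∀ x ∈ Set.Ici (0:ℝ),
      HasDerivAt (fun s : ℝ => -(((s : ℂ) / a + 1 / a ^ 2)) * Complex.exp (-a * s))
        ((x : ℂ) * Complex.exp (-a * x)) x := by
    intro x _
    have hid : HasDerivAt (fun s : ℝ => (s : ℂ)) 1 x := Complex.ofRealCLM.hasDerivAt
    have h1 : HasDerivAt (fun s : ℝ => ((s : ℂ) / a + 1 / a ^ 2)) (1 / a) x := by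
      have := (hid.div_const a).add_const (1 / a ^ 2)
      simpa [one_div] using this
    have h2 : HasDerivAt (fun s : ℝ => Complex.exp (-a * s)) (Complex.exp (-a * x) * (-a)) x := by
      have hlin : HasDerivAt (fun s : ℝ => -a * (s : ℂ)) (-a) x := by
        simpa using hid.const_mul (-a)
      exact hlin.cexp
    have := (h1.neg).mul h2
    convert this using 1
    · rfl
    · rfl
    · simp only [Pi.neg_apply]
      field_simp
      ring
  have := integral_Ioi_of_hasDerivAt_of_tendsto' hderiv
    ((aux_integrableOn a ha).congr_fun (fun x _ => rfl) measurableSet_Ioi)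
    (aux_tendsto a ha)
  rw [this]
  simp

lemma aux_finv (a c : ℂ) (ha : 0 < a.re) (x : ℝ) :
    𝓕⁻ (Set.indicator (Set.Ioi 0) (fun s : ℝ => c * ((s : ℂ) * Complex.exp (-a * s)))) x
      = c / (a - 2 * π * Complex.I * x) ^ 2 := by
  have hre : 0 < (a - 2 * π * Complex.I * x).re := by simpa using ha
  rw [Real.fourierInv_eq']
  simp only [RCLike.inner_apply, conj_trivial, smul_eq_mul]
  have hfun : (fun v : ℝ => Complex.exp (↑(2 * π * (x * v)) * Complex.I) *
        (Set.Ioi 0).indicator (fun s : ℝ => c * ((s : ℂ) * Complex.exp (-a * s))) v)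
      = Set.indicator (Set.Ioi 0)
        (fun v : ℝ => c * ((v : ℂ) * Complex.exp (-(a - 2 * π * Complex.I * x) * v))) := by
    funext v
    by_cases hv : v ∈ Set.Ioi (0:ℝ)
    · rw [Set.indicator_of_mem hv, Set.indicator_of_mem hv]
      have hexp : (↑(2 * π * (x * v)) * Complex.I) + (-a * v)
          = -(a - 2 * π * Complex.I * x) * v := by push_cast; ring
      rw [← hexp, Complex.exp_add]; ring
    · simp [Set.indicator_of_notMem hv]
  rw [hfun, integral_indicator measurableSet_Ioi, MeasureTheory.integral_const_mul,
    aux_integral _ hre]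
  ring

/-- Residue-theorem identity behind the Laplace-transform representation (Lemma 5.2). -/
theorem stmt_4 (t ε E : ℝ) (ht : 0 < t) (hε : 0 < ε) :
    (1 / (2 * (Real.pi : ℂ) * Complex.I)) *
      ∫ x : ℝ, Complex.exp (-Complex.I * (t : ℂ) * ((x : ℂ) + Complex.I * (ε : ℂ))) /
        (Complex.I * (t : ℂ) * ((E : ℂ) - ((x : ℂ) + Complex.I * (ε : ℂ))) ^ 2)
      = Complex.exp (-Complex.I * (t : ℂ) * (E : ℂ)) := by
  have hπ : (0:ℝ) < π := Real.pi_pos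
  set a : ℂ := 2 * π * ((ε:ℂ) + Complex.I * E) with ha_def
  have ha : 0 < a.re := by
    have : a.re = 2 * π * ε := by simp [ha_def, Complex.mul_re]
    rw [this]; positivity
  set c : ℂ := -4 * (π:ℂ)^2 with hc_def
  set f : ℝ → ℂ :=
    Set.indicator (Set.Ioi 0) (fun s : ℝ => c * ((s : ℂ) * Complex.exp (-a * s))) with hf_def
  have hg_ne : ∀ x : ℝ, ((x:ℂ) - E + Complex.I * ε) ≠ 0 := by
    intro x h
    have := congrArg Complex.im h
    simp at this
    exact hε.ne' this
  -- 𝓕⁻ f in closed form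
  have hfinv : ∀ x : ℝ, 𝓕⁻ f x = 1 / ((x:ℂ) - E + Complex.I * ε) ^ 2 := by
    intro x
    rw [hf_def, aux_finv a c ha x]
    have hD : a - 2 * (π:ℂ) * Complex.I * x
        = (-2 * π * Complex.I) * ((x:ℂ) - E + Complex.I * ε) := by
      rw [ha_def]; push_cast; ring_nf; rw [Complex.I_sq]; ring
    rw [hD, mul_pow]
    have hI2 : ((-2 * (π:ℂ) * Complex.I)) ^ 2 = -(4 * (π:ℂ)^2) := by
      rw [mul_pow, Complex.I_sq]; ring
    rw [hI2, hc_def]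
    rw [div_eq_div_iff (by
        intro h
        rcases mul_eq_zero.mp h with h | h
        · simp at h
        · exact pow_ne_zero 2 (hg_ne x) h) (pow_ne_zero 2 (hg_ne x))]
    ring
  -- integrability of the closed form
  have hg_int : Integrable (fun x : ℝ => 1 / ((x:ℂ) - E + Complex.I * ε) ^ 2) := by
    have hmaj : Integrable (fun x : ℝ => ((x - E)^2 + ε^2)⁻¹) := by
      have h1 := integrable_inv_one_add_sq.comp_div hε.ne'
      have h2 := (h1.const_mul ((ε^2)⁻¹)).comp_sub_right E
      refine h2.congr (ae_of_all _ fun x => ?_)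
      field_simp
      ring
    refine Integrable.mono' hmaj ?_ (ae_of_all _ fun x => ?_)
    · refine (Continuous.div continuous_const ?_ ?_).aestronglyMeasurable
      · exact ((Complex.continuous_ofReal.sub continuous_const).add continuous_const).pow 2
      · exact fun x => pow_ne_zero 2 (hg_ne x)
    · have hns : ‖(x:ℂ) - E + Complex.I * ε‖ ^ 2 = (x - E)^2 + ε^2 := by
        rw [Complex.sq_norm, Complex.normSq_apply]
        simp
        ring
      rw [norm_div, norm_one, norm_pow, hns, one_div]
  have hf_int : Integrable f := by
    rw [hf_def]
    exact MeasureTheory.IntegrableOn.integrable_indicator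
      ((aux_integrableOn a ha).const_mul c) measurableSet_Ioi
  have hFf_int : Integrable (𝓕 f) := by
    have h𝓕 : 𝓕 f = fun w : ℝ => 1 / (((-w : ℝ):ℂ) - E + Complex.I * ε) ^ 2 := by
      funext w
      rw [show 𝓕 f w = 𝓕⁻ f (-w) by
        rw [Real.fourierInv_eq_fourier_neg, neg_neg], hfinv]
    rw [h𝓕]
    exact hg_int.comp_neg
  have hw0 : 0 < t / (2 * π) := by positivity
  have hcont : ContinuousAt f (t / (2 * π)) := by
    have hinner : Continuous (fun s : ℝ => c * ((s : ℂ) * Complex.exp (-a * s))) :=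
      continuous_const.mul (Complex.continuous_ofReal.mul (Complex.continuous_exp.comp
        (continuous_const.mul Complex.continuous_ofReal)))
    refine hinner.continuousAt.congr ?_
    filter_upwards [isOpen_Ioi.mem_nhds hw0] with s hs
    rw [hf_def, Set.indicator_of_mem hs]
  -- Fourier inversion
  have hinv := hf_int.fourier_fourierInv_eq hFf_int hcont
  have hgFf : 𝓕 ((fun x : ℝ => 1 / ((x:ℂ) - E + Complex.I * ε) ^ 2) : ℝ → ℂ) (t / (2 * π)) = f (t / (2 * π)) := by
    rw [show (fun x : ℝ => 1 / ((x:ℂ) - E + Complex.I * ε) ^ 2) = 𝓕⁻ f from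
      funext fun x => (hfinv x).symm]
    exact hinv
  -- rewrite the target integrand
  have hIt : Complex.I * (t:ℂ) ≠ 0 := mul_ne_zero Complex.I_ne_zero (by exact_mod_cast ht.ne')
  have hintegrand : (fun x : ℝ => Complex.exp (-Complex.I * (t : ℂ) * ((x : ℂ) + Complex.I * (ε : ℂ))) /
        (Complex.I * (t : ℂ) * ((E : ℂ) - ((x : ℂ) + Complex.I * (ε : ℂ))) ^ 2))
      = fun x : ℝ => (Complex.exp ((t*ε : ℝ)) / (Complex.I * t)) *
          (Complex.exp (↑(-2 * π * x * (t / (2*π))) * Complex.I) •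
            (1 / ((x:ℂ) - E + Complex.I * ε) ^ 2)) := by
    funext x
    have h1 : (-2 * π * x * (t / (2*π)) : ℝ) = -(x*t) := by field_simp
    rw [h1, smul_eq_mul]
    have hexp : -Complex.I * (t:ℂ) * ((x : ℂ) + Complex.I * (ε : ℂ))
        = ((t*ε : ℝ):ℂ) + ((-(x*t) : ℝ):ℂ) * Complex.I := by
      push_cast; ring_nf; rw [Complex.I_sq]; ring
    rw [hexp, Complex.exp_add]
    have hsq : ((E : ℂ) - ((x : ℂ) + Complex.I * (ε : ℂ)))^2
        = ((x:ℂ) - E + Complex.I * ε)^2 := by ring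
    rw [hsq]
    field_simp
  rw [hintegrand, MeasureTheory.integral_const_mul]
  rw [show (∫ x : ℝ, Complex.exp (↑(-2 * π * x * (t / (2*π))) * Complex.I) •
        (1 / ((x:ℂ) - E + Complex.I * ε) ^ 2))
      = 𝓕 ((fun x : ℝ => 1 / ((x:ℂ) - E + Complex.I * ε) ^ 2) : ℝ → ℂ) (t / (2 * π)) from
    (Real.fourier_real_eq_integral_exp_smul _ _).symm]
  rw [hgFf, hf_def, Set.indicator_of_mem (show t/(2*π) ∈ Set.Ioi (0:ℝ) from hw0)]
  -- final computation
  have hwa : -a * (((t / (2*π) : ℝ)):ℂ) = ((-(t*ε) : ℝ):ℂ) + (-Complex.I * t * E) := by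
    rw [ha_def]; push_cast; field_simp
    ring
  rw [hwa, Complex.exp_add]
  have hcollect : Complex.exp ((t*ε : ℝ):ℂ) * Complex.exp ((-(t*ε) : ℝ):ℂ) = 1 := by
    rw [← Complex.exp_add]; push_cast; ring_nf; exact Complex.exp_zero
  rw [hc_def]
  push_cast
  rw [Complex.exp_neg]
  have hE2 : Complex.exp ((t:ℂ) * ε) ≠ 0 := Complex.exp_ne_zero _
  have hπc : ((π:ℝ):ℂ) ≠ 0 := by exact_mod_cast Real.pi_ne_zero
  have htc : (t:ℂ) ≠ 0 := by exact_mod_cast ht.ne'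
  field_simp
  ring_nf
  simp only [Complex.I_sq]
  norm_num
end

section
/- Let G : ℝ → ℂ be continuous with compact support, let λ₀ ∈ ℝ, and let λ₁ ∈ ℂ with Im λ₁ < 0. Then for every q ∈ (0, 1], |∫_ℝ G(r) · (1 − e^{i q (r + λ₀ − λ₁)}) / (r + λ₀ − λ₁) dr| ≤ q · ∫_ℝ |G(r)| dr. -/
open MeasureTheory

/- For `Im w ≥ 0` the segment from `0` to `I w` lies in the half-plane `Re ≤ 0`, where
`‖exp‖ ≤ 1`, so the mean value inequality gives `‖1 - exp (I w)‖ ≤ ‖w‖`. Hence the kernel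
`(1 - exp (I q z)) / z` is bounded by `q` whenever `Im z ≥ 0`, which holds for
`z = r + λ₀ - λ₁` because `Im λ₁ < 0`; integrating against `G` gives the bound. -/

theorem Complex.norm_exp_sub_one_le_norm_of_re_nonpos {z : ℂ} (hz : z.re ≤ 0) :
    ‖Complex.exp z - 1‖ ≤ ‖z‖ := by
  have h := (convex_halfSpace_re_le (0 : ℝ)).norm_image_sub_le_of_norm_deriv_le
    (f := Complex.exp) (C := 1) (fun w _ => Complex.differentiableAt_exp)
    (fun w (hw : w.re ≤ 0) => by simpa [Complex.norm_exp] using hw)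
    (show (0 : ℂ).re ≤ 0 by simp) hz
  simpa using h

theorem Complex.norm_one_sub_exp_I_mul_le {w : ℂ} (hw : 0 ≤ w.im) :
    ‖1 - Complex.exp (Complex.I * w)‖ ≤ ‖w‖ := by
  rw [norm_sub_rev]
  simpa using Complex.norm_exp_sub_one_le_norm_of_re_nonpos (z := Complex.I * w) (by simpa using hw)

theorem Complex.norm_one_sub_exp_I_mul_div_le {q : ℝ} (hq : 0 ≤ q) {z : ℂ} (hz : 0 ≤ z.im) :
    ‖(1 - Complex.exp (Complex.I * q * z)) / z‖ ≤ q := by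
  -- at `z = 0` the left side is `0` by the convention `x / 0 = 0`
  rcases eq_or_ne z 0 with rfl | hz0
  · simpa using hq
  have hexp : ‖1 - Complex.exp (Complex.I * (q * z))‖ ≤ q * ‖z‖ := by
    simpa [abs_of_nonneg hq] using
      Complex.norm_one_sub_exp_I_mul_le (w := q * z) (by simpa using mul_nonneg hq hz)
  rw [norm_div, div_le_iff₀ (norm_pos_iff.2 hz0), mul_assoc]
  exact hexp

theorem MeasureTheory.norm_integral_mul_le_of_norm_le {α E : Type*} [MeasurableSpace α]
    {μ : Measure α} [NormedRing E] [NormedSpace ℝ E] {g K : α → E} (hg : Integrable g μ)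
    {C : ℝ} (hK : ∀ x, ‖K x‖ ≤ C) :
    ‖∫ x, g x * K x ∂μ‖ ≤ C * ∫ x, ‖g x‖ ∂μ := by
  rw [← integral_const_mul]
  refine norm_integral_le_of_norm_le (hg.norm.const_mul C) (ae_of_all _ fun x => ?_)
  calc ‖g x * K x‖ ≤ ‖g x‖ * ‖K x‖ := norm_mul_le _ _
    _ ≤ ‖g x‖ * C := by gcongr; exact hK x
    _ = C * ‖g x‖ := mul_comm _ _

/-- Bound on the remainder term r₂(q) in the proof of Lemma 5.7. -/
theorem stmt_6 (G : ℝ → ℂ) (hG : Continuous G) (hsupp : HasCompactSupport G)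
    (lam0 : ℝ) (lam1 : ℂ) (him : lam1.im < 0) (q : ℝ) (hq : q ∈ Set.Ioc (0 : ℝ) 1) :
    ‖∫ r : ℝ,
        G r * (1 - Complex.exp (Complex.I * (q : ℂ) * ((r : ℂ) + (lam0 : ℂ) - lam1))) /
          ((r : ℂ) + (lam0 : ℂ) - lam1)‖
      ≤ q * ∫ r : ℝ, ‖G r‖ := by
  simp only [mul_div_assoc]
  refine norm_integral_mul_le_of_norm_le (hG.integrable_of_hasCompactSupport hsupp) fun r => ?_
  exact Complex.norm_one_sub_exp_I_mul_div_le hq.1.le (by simpa using him.le)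
end

section
/- Let G : ℝ → ℂ be continuously differentiable with compact support, λ₀ ∈ ℝ, c > 0, and K > 0. Then there exists a constant C > 0 such that for every g ∈ (0, e⁻¹], every Q ≥ 1, and every λ₁ ∈ ℂ with |Re λ₁| ≤ K and Im λ₁ ≤ −c·g², one has |∫_ℝ G(r) · e^{i Q (r + λ₀ − λ₁)} / (r + λ₀ − λ₁) dr| ≤ C / (Q · g²). -/
/-! Integrating by parts against `exp (I Q (r + w))`, whose derivative is `I Q` times itself,
gains the factor `1 / Q`. Since `Im w > 0` the exponential has modulus at most `1`, and what
remains is bounded by `‖G'‖₁ / Im w` plus `sup ‖G‖ · ∫ |r + w|⁻² = π sup ‖G‖ / Im w`. -/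

open MeasureTheory Real Complex

theorem norm_ofReal_add_sq (r : ℝ) (w : ℂ) : ‖(r : ℂ) + w‖ ^ 2 = (r + w.re) ^ 2 + w.im ^ 2 := by
  rw [Complex.sq_norm, normSq_apply]
  simp only [add_re, ofReal_re, add_im, ofReal_im, zero_add]
  ring

theorem inv_sq_add_sq_eq_mul_inv_one_add_div_sq {η : ℝ} (hη : η ≠ 0) (x : ℝ) :
    (x ^ 2 + η ^ 2)⁻¹ = (η ^ 2)⁻¹ * (1 + (x / η) ^ 2)⁻¹ := by
  rw [← mul_inv]; congr 1; field_simp; ring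

theorem integrable_inv_norm_ofReal_add_sq {w : ℂ} (hw : w.im ≠ 0) :
    Integrable fun r : ℝ => (‖(r : ℂ) + w‖ ^ 2)⁻¹ := by
  simp_rw [norm_ofReal_add_sq, inv_sq_add_sq_eq_mul_inv_one_add_div_sq hw]
  exact ((integrable_inv_one_add_sq.comp_div hw).const_mul _).comp_add_right w.re

theorem integral_inv_norm_ofReal_add_sq {w : ℂ} (hw : w.im ≠ 0) :
    ∫ r : ℝ, (‖(r : ℂ) + w‖ ^ 2)⁻¹ = π / |w.im| := by
  simp_rw [norm_ofReal_add_sq]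
  rw [integral_add_right_eq_self (fun x : ℝ => (x ^ 2 + w.im ^ 2)⁻¹) w.re]
  simp_rw [inv_sq_add_sq_eq_mul_inv_one_add_div_sq hw]
  rw [integral_const_mul, Measure.integral_comp_div (fun y : ℝ => (1 + y ^ 2)⁻¹),
    integral_univ_inv_one_add_sq, smul_eq_mul, ← sq_abs w.im]
  field_simp

theorem norm_cexp_I_mul_mul_le_one {Q : ℝ} {z : ℂ} (hQ : 0 ≤ Q) (hz : 0 ≤ z.im) :
    ‖exp (I * Q * z)‖ ≤ 1 := by
  rw [Complex.norm_exp, Real.exp_le_one_iff]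
  simp only [mul_re, I_re, I_im, mul_im, ofReal_re, ofReal_im]
  nlinarith

theorem integral_mul_cexp_div_eq {G : ℝ → ℂ} (hG : ContDiff ℝ 1 G) (hsupp : HasCompactSupport G)
    (Q : ℝ) {w : ℂ} (hw : w.im ≠ 0) :
    I * Q * ∫ r : ℝ, G r * exp (I * Q * (r + w)) / (r + w) =
      ∫ r : ℝ, (G r / (r + w) ^ 2 - deriv G r / (r + w)) * exp (I * Q * (r + w)) := by
  set z : ℝ → ℂ := fun r => r + w
  set e : ℝ → ℂ := fun r => exp (I * Q * z r)
  have hz : ∀ r, z r ≠ 0 := fun r h => hw (by simpa [z] using congrArg im h)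
  have hz2 : ∀ r, z r ^ 2 ≠ 0 := fun r => pow_ne_zero 2 (hz r)
  have hz' : ∀ r, HasDerivAt z 1 r := fun r => (ofRealCLM.hasDerivAt).add_const w
  have he' : ∀ r, HasDerivAt e (e r * (I * Q)) r := fun r => by
    simpa using ((hz' r).const_mul (I * Q)).cexp
  have hu' : ∀ r, HasDerivAt (fun r => G r / z r)
      (-(G r / z r ^ 2 - deriv G r / z r)) r := fun r => by
    refine (((hG.differentiable one_ne_zero r).hasDerivAt).div (hz' r) (hz r)).congr_deriv ?_
    field_simp [hz r]
    ring
  have hGC : Continuous G := hG.continuous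
  have hG'C : Continuous (deriv G) := hG.continuous_deriv le_rfl
  have hint : ∀ f : ℝ → ℂ, Continuous f →
      (∀ r, G r = 0 → deriv G r = 0 → f r = 0) → Integrable f := fun f hf hf0 =>
    hf.integrable_of_hasCompactSupport <| hsupp.mono' fun r hr => by
      by_contra h
      exact hr (hf0 r (image_eq_zero_of_notMem_tsupport h)
        (Function.notMem_support.mp fun h' => h (support_deriv_subset h')))
  have hparts := integral_mul_deriv_eq_deriv_mul_of_integrable (fun r _ => hu' r) (fun r _ => he' r)
    (hint _ (by fun_prop (disch := assumption)) fun r h _ => by simp [h])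
    (hint _ (by fun_prop (disch := assumption)) fun r h h' => by simp [h, h'])
    (hint _ (by fun_prop (disch := assumption)) fun r h _ => by simp [h])
  calc I * Q * ∫ r : ℝ, G r * e r / z r = ∫ r, G r / z r * (e r * (I * Q)) := by
        rw [← integral_const_mul]; congr 1; ext r; ring
    _ = -∫ r, -(G r / z r ^ 2 - deriv G r / z r) * e r := hparts
    _ = _ := by rw [← integral_neg]; simp only [neg_mul, neg_neg]; rfl

theorem norm_integral_mul_cexp_div_le {G : ℝ → ℂ} (hG : ContDiff ℝ 1 G)
    (hsupp : HasCompactSupport G) {M Q : ℝ} (hM : ∀ r, ‖G r‖ ≤ M) (hQ : 0 < Q) {w : ℂ}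
    (hw : 0 < w.im) :
    ‖∫ r : ℝ, G r * exp (I * Q * (r + w)) / (r + w)‖ ≤
      ((∫ r, ‖deriv G r‖) + π * M) / (Q * w.im) := by
  have him_le : ∀ r : ℝ, w.im ≤ ‖(r : ℂ) + w‖ := fun r => by
    simpa [abs_of_pos hw] using abs_im_le_norm ((r : ℂ) + w)
  have hpt : ∀ r : ℝ, ‖(G r / (r + w) ^ 2 - deriv G r / (r + w)) * exp (I * Q * (r + w))‖ ≤
      M * (‖(r : ℂ) + w‖ ^ 2)⁻¹ + ‖deriv G r‖ / w.im := fun r => by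
    calc _ ≤ ‖G r / (r + w) ^ 2 - deriv G r / (r + w)‖ * 1 := by
          rw [norm_mul]
          gcongr
          exact norm_cexp_I_mul_mul_le_one hQ.le (by simpa using hw.le)
      _ ≤ ‖G r‖ / ‖(r : ℂ) + w‖ ^ 2 + ‖deriv G r‖ / ‖(r : ℂ) + w‖ := by
          rw [mul_one, ← norm_pow, ← norm_div, ← norm_div]
          exact norm_sub_le _ _
      _ ≤ M * (‖(r : ℂ) + w‖ ^ 2)⁻¹ + ‖deriv G r‖ / w.im := by
          rw [← div_eq_mul_inv]
          gcongr
          exacts [hM r, him_le r]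
  have hA : Integrable fun r => ‖deriv G r‖ :=
    ((hG.continuous_deriv le_rfl).integrable_of_hasCompactSupport hsupp.deriv).norm
  have hP := (integrable_inv_norm_ofReal_add_sq hw.ne').const_mul M
  have hbound_integral :
      ∫ r : ℝ, (M * (‖(r : ℂ) + w‖ ^ 2)⁻¹ + ‖deriv G r‖ / w.im) =
        ((∫ r, ‖deriv G r‖) + π * M) / w.im := by
    rw [integral_add hP (hA.div_const _), integral_const_mul,
      integral_inv_norm_ofReal_add_sq hw.ne', integral_div, abs_of_pos hw]
    ring
  rw [div_mul_eq_div_div_swap, le_div_iff₀ hQ, mul_comm, ← hbound_integral]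
  calc Q * ‖∫ r : ℝ, G r * exp (I * Q * (r + w)) / (r + w)‖
      = ‖I * Q * ∫ r : ℝ, G r * exp (I * Q * (r + w)) / (r + w)‖ := by
        rw [norm_mul, norm_mul, norm_I, norm_real, Real.norm_of_nonneg hQ.le,
          one_mul]
    _ ≤ _ := by
      rw [integral_mul_cexp_div_eq hG hsupp Q hw.ne']
      exact norm_integral_le_of_norm_le (hP.add (hA.div_const _)) (.of_forall hpt)

theorem stmt_7_general (G : ℝ → ℂ) (hG : ContDiff ℝ 1 G) (hsupp : HasCompactSupport G)
    (lam0 c K : ℝ) (hc : 0 < c) :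
    ∃ C : ℝ, 0 < C ∧ ∀ g : ℝ, 0 < g → g ≤ Real.exp (-1) → ∀ Q : ℝ, 1 ≤ Q →
      ∀ lam1 : ℂ, |lam1.re| ≤ K → lam1.im ≤ -c * g ^ 2 →
        ‖(∫ r : ℝ,
            G r * Complex.exp (Complex.I * (Q : ℂ) * ((r : ℂ) + (lam0 : ℂ) - lam1)) /
              ((r : ℂ) + (lam0 : ℂ) - lam1))‖
          ≤ C / (Q * g ^ 2) := by
  obtain ⟨M, hM⟩ := hsupp.exists_bound_of_continuous hG.continuous
  have hM0 : 0 ≤ M := (norm_nonneg _).trans (hM 0)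
  set A := ∫ r, ‖deriv G r‖
  refine ⟨(A + π * M) / c + 1, by positivity, fun g hg _ Q hQ lam1 _ him => ?_⟩
  have hQ0 : 0 < Q := one_pos.trans_le hQ
  have hw : c * g ^ 2 ≤ ((lam0 : ℂ) - lam1).im := by
    simp only [sub_im, ofReal_im, zero_sub]
    linarith
  simp only [add_sub_assoc]
  calc _ ≤ (A + π * M) / (Q * ((lam0 : ℂ) - lam1).im) :=
        norm_integral_mul_cexp_div_le hG hsupp hM hQ0 (lt_of_lt_of_le (by positivity) hw)
    _ ≤ (A + π * M) / (Q * (c * g ^ 2)) := by gcongr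
    _ = (A + π * M) / c / (Q * g ^ 2) := by field_simp
    _ ≤ _ := by gcongr; linarith

/-- Bound on the remainder term r₁(Q) in the proof of Lemma 5.7 (equation (5.78)). -/
theorem stmt_7 (G : ℝ → ℂ) (hG : ContDiff ℝ 1 G) (hsupp : HasCompactSupport G)
    (lam0 c K : ℝ) (hc : 0 < c) (hK : 0 < K) :
    ∃ C : ℝ, 0 < C ∧ ∀ g : ℝ, 0 < g → g ≤ Real.exp (-1) → ∀ Q : ℝ, 1 ≤ Q →
      ∀ lam1 : ℂ, |lam1.re| ≤ K → lam1.im ≤ -c * g ^ 2 →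
        ‖(∫ r : ℝ,
            G r * Complex.exp (Complex.I * (Q : ℂ) * ((r : ℂ) + (lam0 : ℂ) - lam1)) /
              ((r : ℂ) + (lam0 : ℂ) - lam1))‖
          ≤ C / (Q * g ^ 2) :=
  stmt_7_general G hG hsupp lam0 c K hc
end

section
/- Let c > 0, α ≥ c, and E₁ < 0 be fixed real numbers, and let G : ℝ → ℝ be continuous, nonnegative, compactly supported, with G(r) = 0 whenever r < c, and G(α) > 0. Then there exist constants C > 0 and g₀ ∈ (0, 1] such that for every g ∈ (0, g₀], the integral I(g) := ∫_ℝ G(r) / ( (r − α − i g² E₁)(r + α − i g² E₁) ) dr satisfies |Im I(g)| ≥ C. -/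
open MeasureTheory Real

lemma lorentz_int (a e δ : ℝ) (he : 0 < e) :
    ∫ r in (a - δ)..(a + δ), e / ((r - a)^2 + e^2) = 2 * Real.arctan (δ / e) := by
  have h : ∀ x ∈ Set.uIcc (a - δ) (a + δ),
      HasDerivAt (fun r => Real.arctan ((r - a)/e)) (e / ((x - a)^2 + e^2)) x := by
    intro x _
    have h1 : HasDerivAt (fun r : ℝ => (r - a)/e) (1/e) x := by
      simpa using ((hasDerivAt_id x).sub_const a).div_const e
    have h2 := (Real.hasDerivAt_arctan ((x - a)/e)).comp x h1
    refine h2.congr_deriv ?_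
    have hpos : (0:ℝ) < (x - a)^2 + e^2 := by positivity
    field_simp
    ring
  have hc : ContinuousOn (fun r => e / ((r - a)^2 + e^2)) (Set.uIcc (a - δ) (a + δ)) := by
    apply Continuous.continuousOn
    apply continuous_const.div (by continuity)
    intro x; positivity
  rw [intervalIntegral.integral_eq_sub_of_hasDerivAt h hc.intervalIntegrable]
  have h1 : (a + δ - a)/e = δ/e := by ring_nf
  have h2 : (a - δ - a)/e = -(δ/e) := by ring_nf
  rw [h1, h2, Real.arctan_neg]
  ring

lemma im_div (Gr p q e : ℝ) (he : 0 < e) :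
    ((Gr:ℂ) / ((↑p + ↑e * Complex.I) * (↑q + ↑e * Complex.I))).im
      = -(Gr * (p + q) * e / ((p^2+e^2) * (q^2+e^2))) := by
  have h1 : (0:ℝ) < p^2+e^2 := by positivity
  have h2 : (0:ℝ) < q^2+e^2 := by positivity
  rw [Complex.div_im]
  have hns : Complex.normSq ((↑p + ↑e * Complex.I) * (↑q + ↑e * Complex.I))
      = (p^2+e^2) * (q^2+e^2) := by
    rw [Complex.normSq_mul]
    simp [Complex.normSq_apply]
    ring
  rw [hns]
  simp [Complex.mul_im, Complex.mul_re]
  field_simp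

lemma f_eq (Gr p q e α : ℝ) (hα : α ≠ 0) (hq : q = p + 2*α)
    (h1 : 0 < p^2+e^2) (h2 : 0 < q^2+e^2) :
    Gr * ((1/(2*α)) * (e/(p^2+e^2) - e/(q^2+e^2)))
      = Gr * (p+q) * e/((p^2+e^2)*(q^2+e^2)) := by
  subst hq
  field_simp
  ring

set_option maxHeartbeats 1600000 in
/-- Core estimate of Appendix D: the imaginary part of the Lorentzian-type integral
is bounded below uniformly for small coupling g. -/
theorem stmt_11 (c α E1 : ℝ) (hc : 0 < c) (hα : c ≤ α) (hE1 : E1 < 0)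
    (G : ℝ → ℝ) (hG : Continuous G) (hsupp : HasCompactSupport G)
    (hGnonneg : ∀ r, 0 ≤ G r) (hGzero : ∀ r, r < c → G r = 0) (hGα : 0 < G α) :
    ∃ C : ℝ, 0 < C ∧ ∃ g₀ : ℝ, g₀ ∈ Set.Ioc (0 : ℝ) 1 ∧ ∀ g : ℝ, g ∈ Set.Ioc 0 g₀ →
      C ≤ |(∫ r : ℝ, ((G r : ℂ) /
          (((r : ℂ) - (α : ℂ) - Complex.I * (g : ℂ) ^ 2 * (E1 : ℂ)) *
           ((r : ℂ) + (α : ℂ) - Complex.I * (g : ℂ) ^ 2 * (E1 : ℂ))))).im| := by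
  have hα0 : 0 < α := lt_of_lt_of_le hc hα
  -- continuity window
  obtain ⟨δ₀, hδ₀, hδ₀G⟩ : ∃ δ₀ > 0, ∀ r, |r - α| < δ₀ → G α / 2 ≤ G r := by
    have := Metric.continuousAt_iff.mp (hG.continuousAt (x := α))
    obtain ⟨δ₀, hδ₀, h⟩ := this (G α / 2) (by linarith)
    refine ⟨δ₀, hδ₀, fun r hr => ?_⟩
    have := h (show dist r α < δ₀ by simpa [Real.dist_eq] using hr)
    rw [Real.dist_eq] at this
    have := abs_lt.mp this
    linarith [this.1]
  set δ : ℝ := min (δ₀ / 2) α with hδdef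
  have hδpos : 0 < δ := lt_min (by linarith) hα0
  have hδα : δ ≤ α := min_le_right _ _
  have hδwin : ∀ r ∈ Set.Icc (α - δ) (α + δ), G α / 2 ≤ G r := by
    intro r hr
    apply hδ₀G
    have h1 := hr.1; have h2 := hr.2
    have : δ ≤ δ₀ / 2 := min_le_left _ _
    rw [abs_lt]; constructor <;> linarith
  set C : ℝ := G α * π / (16 * α) with hC
  have hCpos : 0 < C := by
    have := Real.pi_pos
    positivity
  have hE : 0 < -E1 := by linarith
  have hπ := Real.pi_pos
  set m : ℝ := min (δ / (-E1)) (π * α^2 / (8 * δ * (-E1))) with hm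
  have hmpos : 0 < m := lt_min (div_pos hδpos hE) (by positivity)
  set g₀ : ℝ := min 1 (Real.sqrt m) with hg₀
  refine ⟨C, hCpos, g₀, ⟨lt_min one_pos (Real.sqrt_pos.mpr hmpos), min_le_left _ _⟩, ?_⟩
  rintro g ⟨hg0, hgg₀⟩
  set e : ℝ := g^2 * (-E1) with he
  have hepos : 0 < e := mul_pos (pow_pos hg0 2) hE
  have hg2m : g^2 ≤ m := by
    have h1 : g ≤ Real.sqrt m := le_trans hgg₀ (min_le_right _ _)
    nlinarith [Real.sq_sqrt hmpos.le, Real.sqrt_nonneg m]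
  have heδ : e ≤ δ := by
    have h1 : g^2 ≤ δ / (-E1) := le_trans hg2m (min_le_left _ _)
    rw [le_div_iff₀ hE] at h1
    exact h1
  have heπ : 2 * δ * (e / α^2) ≤ π / 4 := by
    have h1 : g^2 ≤ π * α^2 / (8 * δ * (-E1)) := le_trans hg2m (min_le_right _ _)
    rw [le_div_iff₀ (by positivity)] at h1
    have h2 : e / α^2 ≤ π / (8 * δ) := by
      rw [div_le_div_iff₀ (by positivity) (by positivity)]
      nlinarith
    have h3 : 2 * δ * (e / α^2) ≤ 2 * δ * (π / (8 * δ)) :=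
      mul_le_mul_of_nonneg_left h2 (by positivity)
    have h4 : 2 * δ * (π / (8 * δ)) = π / 4 := by field_simp; ring
    linarith
  clear_value δ C m g₀ e
  -- notation
  set A : ℝ → ℂ := fun r => (r : ℂ) - (α : ℂ) - Complex.I * (g : ℂ) ^ 2 * (E1 : ℂ) with hAdef
  set B : ℝ → ℂ := fun r => (r : ℂ) + (α : ℂ) - Complex.I * (g : ℂ) ^ 2 * (E1 : ℂ) with hBdef
  have hkey : Complex.I * (g : ℂ) ^ 2 * (E1 : ℂ) = ((g^2 * E1 : ℝ) : ℂ) * Complex.I := by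
    push_cast; ring
  have hA' : ∀ r : ℝ, A r = ((r - α : ℝ):ℂ) + ((e:ℝ):ℂ) * Complex.I := by
    intro r; rw [hAdef, he]; push_cast; ring
  have hB' : ∀ r : ℝ, B r = ((r + α : ℝ):ℂ) + ((e:ℝ):ℂ) * Complex.I := by
    intro r; rw [hBdef, he]; push_cast; ring
  have hAim : ∀ r, (A r).im = e := by
    intro r; rw [hA']; simp
  have hBim : ∀ r, (B r).im = e := by
    intro r; rw [hB']; simp
  have hAne : ∀ r, A r ≠ 0 := by
    intro r h
    have h2 := hAim r
    rw [h, Complex.zero_im] at h2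
    exact absurd h2.symm (ne_of_gt hepos)
  have hBne : ∀ r, B r ≠ 0 := by
    intro r h
    have h2 := hBim r
    rw [h, Complex.zero_im] at h2
    exact absurd h2.symm (ne_of_gt hepos)
  -- real integrand
  set f : ℝ → ℝ := fun r =>
    G r * ((1/(2*α)) * (e/((r-α)^2 + e^2) - e/((r+α)^2 + e^2))) with hf
  have hc1 : Continuous (fun r : ℝ => (r - α)^2 + e^2) :=
    ((continuous_id.sub continuous_const).pow 2).add continuous_const
  have hc2 : Continuous (fun r : ℝ => (r + α)^2 + e^2) :=
    ((continuous_id.add continuous_const).pow 2).add continuous_const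
  have hP1 : ∀ r : ℝ, 0 < (r-α)^2 + e^2 := fun r => by positivity
  have hP2 : ∀ r : ℝ, 0 < (r+α)^2 + e^2 := fun r => by positivity
  -- pointwise imaginary part
  have him : ∀ r : ℝ, ((G r : ℂ) / (A r * B r)).im = -(f r) := by
    intro r
    rw [hA' r, hB' r, im_div (G r) (r - α) (r + α) e hepos]
    simp only [hf]
    rw [f_eq (G r) (r-α) (r+α) e α hα0.ne' (by ring) (hP1 r) (hP2 r)]
  -- continuity & integrability of the complex integrand
  have hAcont : Continuous A := by
    apply Continuous.sub; apply Continuous.sub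
    · exact Complex.continuous_ofReal
    all_goals exact continuous_const
  have hBcont : Continuous B := by
    apply Continuous.sub; apply Continuous.add
    · exact Complex.continuous_ofReal
    all_goals exact continuous_const
  set z : ℝ → ℂ := fun r => (G r : ℂ) / (A r * B r) with hz
  have hzcont : Continuous z := by
    apply Continuous.div (Complex.continuous_ofReal.comp hG) (hAcont.mul hBcont)
    intro r; exact mul_ne_zero (hAne r) (hBne r)
  have hzsupp : HasCompactSupport z := by
    have h1 : HasCompactSupport (fun r => (G r : ℂ)) :=
      hsupp.comp_left (g := Complex.ofReal) Complex.ofReal_zero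
    apply HasCompactSupport.intro h1.isCompact
    intro r hr
    have : G r = 0 := by
      by_contra h
      exact hr (subset_tsupport _ (by simp [Function.support, h]))
    simp [hz, this]
  have hzint : Integrable z := hzcont.integrable_of_hasCompactSupport hzsupp
  -- f continuity & integrability
  have hfcont : Continuous f := by
    apply hG.mul
    apply Continuous.mul continuous_const
    apply Continuous.sub
    · exact continuous_const.div hc1 (fun r => (hP1 r).ne')
    · exact continuous_const.div hc2 (fun r => (hP2 r).ne')
  have hfsupp : HasCompactSupport f := hsupp.mul_right
  have hfint : Integrable f := hfcont.integrable_of_hasCompactSupport hfsupp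
  -- nonnegativity of f
  have hfnonneg : ∀ r, 0 ≤ f r := by
    intro r
    rcases eq_or_lt_of_le (hGnonneg r) with h | h
    · simp [hf, ← h]
    · have hrc : c ≤ r := by
        by_contra hr
        exact absurd (hGzero r (by linarith)) (ne_of_gt h)
      have hr0 : 0 < r := lt_of_lt_of_le hc hrc
      have hbr : e/((r+α)^2 + e^2) ≤ e/((r-α)^2 + e^2) := by
        apply div_le_div_of_nonneg_left hepos.le (hP1 r)
        nlinarith
      have : 0 ≤ (1/(2*α)) * (e/((r-α)^2 + e^2) - e/((r+α)^2 + e^2)) := by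
        apply mul_nonneg (by positivity); linarith
      exact mul_nonneg h.le this
  -- the imaginary part of the integral
  have hIm : (∫ r : ℝ, z r).im = -(∫ r, f r) := by
    have h := integral_im (μ := (volume : Measure ℝ)) hzint
    simp only [RCLike.im_to_complex] at h
    rw [← h, ← integral_neg]
    congr 1; ext r
    simpa using him r
  -- lower bound on ∫ f
  have hintf_nonneg : 0 ≤ ∫ r, f r := integral_nonneg hfnonneg
  -- restrict to Ioc window
  have hle : α - δ ≤ α + δ := by linarith
  have hstep1 : ∫ r in Set.Ioc (α - δ) (α + δ), f r ≤ ∫ r, f r :=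
    setIntegral_le_integral hfint (Filter.Eventually.of_forall hfnonneg)
  have hstep2 : (∫ r in Set.Ioc (α - δ) (α + δ), f r)
      = ∫ r in (α - δ)..(α + δ), f r := (intervalIntegral.integral_of_le hle).symm
  -- lower function
  set low : ℝ → ℝ := fun r =>
    (G α / 2) * ((1/(2*α)) * (e/((r-α)^2 + e^2) - e/((r+α)^2 + e^2))) with hlow
  have hlowcont : Continuous low := by
    apply Continuous.mul continuous_const
    apply Continuous.mul continuous_const
    apply Continuous.sub
    · exact continuous_const.div hc1 (fun r => (hP1 r).ne')
    · exact continuous_const.div hc2 (fun r => (hP2 r).ne')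
  have hstep3 : (∫ r in (α - δ)..(α + δ), low r) ≤ ∫ r in (α - δ)..(α + δ), f r := by
    apply intervalIntegral.integral_mono_on hle
      (hlowcont.intervalIntegrable _ _) (hfcont.intervalIntegrable _ _)
    intro r hr
    have hGr : G α / 2 ≤ G r := hδwin r hr
    have hr0 : 0 ≤ r := by have := hr.1; linarith
    have hbr : e/((r+α)^2 + e^2) ≤ e/((r-α)^2 + e^2) := by
      apply div_le_div_of_nonneg_left hepos.le (hP1 r)
      nlinarith
    have hbpos : 0 ≤ (1/(2*α)) * (e/((r-α)^2 + e^2) - e/((r+α)^2 + e^2)) := by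
      apply mul_nonneg (by positivity); linarith
    exact mul_le_mul_of_nonneg_right hGr hbpos |>.trans_eq rfl
  -- compute the lower integral
  have hL1 : ∫ r in (α - δ)..(α + δ), e/((r-α)^2 + e^2) = 2 * Real.arctan (δ / e) :=
    lorentz_int α e δ hepos
  have hL2 : (∫ r in (α - δ)..(α + δ), e/((r+α)^2 + e^2)) ≤ 2 * δ * (e / α^2) := by
    have hmono : (∫ r in (α - δ)..(α + δ), e/((r+α)^2 + e^2))
        ≤ ∫ _r in (α - δ)..(α + δ), e / α^2 := by
      apply intervalIntegral.integral_mono_on hle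
      · exact (continuous_const.div hc2 (fun r => (hP2 r).ne')).intervalIntegrable _ _
      · exact intervalIntegrable_const
      intro r hr
      have h1 : α ≤ r + α := by have := hr.1; linarith
      have h2 : α^2 ≤ (r+α)^2 + e^2 :=
        le_trans (pow_le_pow_left₀ hα0.le h1 2) (le_add_of_nonneg_right (sq_nonneg e))
      exact div_le_div_of_nonneg_left hepos.le (pow_pos hα0 2) h2
    have hconst : (∫ _r in (α - δ)..(α + δ), e / α^2) = 2 * δ * (e / α^2) := by
      rw [intervalIntegral.integral_const, smul_eq_mul]; ring
    rw [hconst] at hmono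
    exact hmono
  have harctan : π / 4 ≤ Real.arctan (δ / e) := by
    have h1 : (1:ℝ) ≤ δ / e := (one_le_div hepos).mpr heδ
    calc π / 4 = Real.arctan 1 := Real.arctan_one.symm
    _ ≤ Real.arctan (δ / e) := Real.arctan_strictMono.monotone h1  -- name?
  have hlowint : C ≤ ∫ r in (α - δ)..(α + δ), low r := by
    have hsplit : (∫ r in (α - δ)..(α + δ), low r)
        = (G α / 2) * ((1/(2*α)) *
          ((∫ r in (α - δ)..(α + δ), e/((r-α)^2 + e^2))
            - ∫ r in (α - δ)..(α + δ), e/((r+α)^2 + e^2))) := by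
      rw [← intervalIntegral.integral_sub, ← intervalIntegral.integral_const_mul,
        ← intervalIntegral.integral_const_mul]
      · exact (continuous_const.div hc1 (fun r => (hP1 r).ne')).intervalIntegrable _ _
      · exact (continuous_const.div hc2 (fun r => (hP2 r).ne')).intervalIntegrable _ _
    rw [hsplit, hL1]
    have hbig : π / 4 ≤ 2 * Real.arctan (δ / e)
        - ∫ r in (α - δ)..(α + δ), e/((r+α)^2 + e^2) := by
      have := hL2
      linarith
    calc C = (G α / 2) * ((1/(2*α)) * (π/4)) := by rw [hC]; field_simp; ring
    _ ≤ _ := by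
        apply mul_le_mul_of_nonneg_left _ (by positivity)
        apply mul_le_mul_of_nonneg_left hbig (by positivity)
  -- finish
  have hfinal : C ≤ ∫ r, f r := by
    calc C ≤ ∫ r in (α - δ)..(α + δ), low r := hlowint
    _ ≤ ∫ r in (α - δ)..(α + δ), f r := hstep3
    _ = ∫ r in Set.Ioc (α - δ) (α + δ), f r := hstep2.symm
    _ ≤ ∫ r, f r := hstep1
  rw [show (∫ r : ℝ, ((G r : ℂ) / (A r * B r))) = ∫ r, z r from rfl, hIm]
  rw [abs_neg, abs_of_nonneg hintf_nonneg]
  exact hfinal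
end
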